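/- Let (S_k) be a sequence in a normed space converging to f with ‖S_k − f‖ ≤ C·E_{k+1} for a nonincreasing nonnegative sequence (E_k), and let ψ be positive, nonincreasing with ψ(k) → 0. Then ‖Σ_{k=n}^∞ ψ(k)(S_k − S_{k−1})‖ ≤ C'·ψ(n)·E_n for an absolute constant C' (assuming the series converges). -/

import Mathlib

/-- Abstract form of the main estimate in Theorem 1: if ‖S_k − f‖ ≤ C·E_{k+1}
for a nonincreasing nonnegative E and ψ is positive, nonincreasing, tending
to 0, then ‖Σ_{k=n}^∞ ψ(k)(S_k − S_{k−1})‖ ≤ C'·ψ(n)·E_n. -/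
theorem main_estimate {X : Type*} [NormedAddCommGroup X] [NormedSpace ℝ X]
    (S : ℕ → X) (f : X) (E ψ : ℕ → ℝ) (C : ℝ) (hC : 0 < C)
    (happrox : ∀ k, ‖S k - f‖ ≤ C * E (k + 1))
    (hE0 : ∀ k, 0 ≤ E k) (hEmono : ∀ k, E (k + 1) ≤ E k)
    (hψpos : ∀ k, 0 < ψ k) (hψmono : ∀ k, ψ (k + 1) ≤ ψ k)
    (hψlim : Filter.Tendsto ψ Filter.atTop (nhds 0))
    (hsum : ∀ n : ℕ, 1 ≤ n →
      Summable fun j : ℕ => ψ (n + j) • (S (n + j) - S (n + j - 1))) :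
    ∃ C' : ℝ, 0 < C' ∧ ∀ n : ℕ, 1 ≤ n →
      ‖∑' j : ℕ, ψ (n + j) • (S (n + j) - S (n + j - 1))‖ ≤ C' * ψ n * E n := by
  refine ⟨3 * C, by positivity, ?_⟩
  intro n hn
  set a : ℕ → X := fun k => S k - f with ha
  have hEant : Antitone E := antitone_nat_of_succ_le hEmono
  have hψant : Antitone ψ := antitone_nat_of_succ_le hψmono
  have haE : ∀ k, n ≤ k + 1 → ‖a k‖ ≤ C * E n := fun k hk =>
    (happrox k).trans (mul_le_mul_of_nonneg_left (hEant hk) hC.le)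
  have key : ∀ N : ℕ, ∑ j ∈ Finset.range (N + 1), ψ (n + j) • (S (n + j) - S (n + j - 1))
      = ψ (n + N) • a (n + N) - ψ n • a (n - 1)
        + ∑ j ∈ Finset.range N, (ψ (n + j) - ψ (n + j + 1)) • a (n + j) := by
    intro N
    induction N with
    | zero =>
      have h0 : S n - S (n - 1) = a n - a (n - 1) := by
        simp only [ha, sub_sub_sub_cancel_right]
      simp [smul_sub]
      rw [← smul_sub, ← smul_sub, h0]
    | succ N ih =>
      rw [Finset.sum_range_succ, ih, Finset.sum_range_succ]
      have h1 : n + (N + 1) - 1 = n + N := by omega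
      have h2 : S (n + (N + 1)) - S (n + (N + 1) - 1) = a (n + (N + 1)) - a (n + N) := by
        rw [h1]; simp only [ha, sub_sub_sub_cancel_right]
      rw [h2]
      simp only [← Nat.add_assoc]
      module
  have hbnd : ∀ N : ℕ,
      ‖∑ j ∈ Finset.range (N + 1), ψ (n + j) • (S (n + j) - S (n + j - 1))‖
        ≤ 3 * C * ψ n * E n := by
    intro N
    rw [key N]
    have t1 : ‖ψ (n + N) • a (n + N)‖ ≤ ψ n * (C * E n) := by
      rw [norm_smul, Real.norm_eq_abs, abs_of_pos (hψpos _)]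
      exact mul_le_mul (hψant (Nat.le_add_right _ _)) (haE _ (by omega)) (norm_nonneg _)
        (hψpos n).le
    have t2 : ‖ψ n • a (n - 1)‖ ≤ ψ n * (C * E n) := by
      rw [norm_smul, Real.norm_eq_abs, abs_of_pos (hψpos _)]
      refine mul_le_mul_of_nonneg_left (haE _ (by omega)) (hψpos n).le
    have t3 : ‖∑ j ∈ Finset.range N, (ψ (n + j) - ψ (n + j + 1)) • a (n + j)‖
        ≤ ψ n * (C * E n) := by
      calc ‖∑ j ∈ Finset.range N, (ψ (n + j) - ψ (n + j + 1)) • a (n + j)‖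
          ≤ ∑ j ∈ Finset.range N, (ψ (n + j) - ψ (n + j + 1)) * (C * E n) := by
            refine (norm_sum_le _ _).trans (Finset.sum_le_sum fun j _ => ?_)
            rw [norm_smul, Real.norm_eq_abs,
              abs_of_nonneg (sub_nonneg.2 (hψmono (n + j)))]
            exact mul_le_mul_of_nonneg_left (haE _ (by omega))
              (sub_nonneg.2 (hψmono (n + j)))
        _ = (ψ n - ψ (n + N)) * (C * E n) := by
            rw [← Finset.sum_mul]
            congr 1
            have := Finset.sum_range_sub' (fun j => ψ (n + j)) N
            simpa [Nat.add_assoc] using this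
        _ ≤ ψ n * (C * E n) := by
            refine mul_le_mul_of_nonneg_right ?_ (mul_nonneg hC.le (hE0 n))
            linarith [hψpos (n + N)]
    calc ‖ψ (n + N) • a (n + N) - ψ n • a (n - 1)
          + ∑ j ∈ Finset.range N, (ψ (n + j) - ψ (n + j + 1)) • a (n + j)‖
        ≤ ‖ψ (n + N) • a (n + N)‖ + ‖ψ n • a (n - 1)‖
            + ‖∑ j ∈ Finset.range N, (ψ (n + j) - ψ (n + j + 1)) • a (n + j)‖ :=
          (norm_add_le _ _).trans (add_le_add (norm_sub_le _ _) le_rfl)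
      _ ≤ ψ n * (C * E n) + ψ n * (C * E n) + ψ n * (C * E n) := by
          exact add_le_add (add_le_add t1 t2) t3
      _ = 3 * C * ψ n * E n := by ring
  have hts := (hsum n hn).hasSum.tendsto_sum_nat.norm
  refine le_of_tendsto hts ?_
  filter_upwards [Filter.eventually_gt_atTop 0] with N hN
  obtain ⟨M, rfl⟩ := Nat.exists_eq_succ_of_ne_zero hN.ne'
  exact hbnd M
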